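/- If u is a nontrivial upcycle for A^n, then for any letter ℓ ∈ A, the frame of the window of u covering the constant word ℓ^n is not curtained. -/

import Mathlib

/-- The window of length `n` of the cyclic partial word `u` starting at position `i`
covers the total word `w`. -/
def Covers (a n : ℕ) (u : ℕ → Option (Fin a)) (i : ℕ) (w : Fin n → Fin a) : Prop :=
  ∀ j : Fin n, u (i + (j : ℕ)) = none ∨ u (i + (j : ℕ)) = some (w j)

/-- `u`, viewed as a cyclic partial word of length `N`, is a universal partial cycle
for `(Fin a)^n`. -/
def IsUpcycle (a n N : ℕ) (u : ℕ → Option (Fin a)) : Prop :=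
  (∀ i, u (i + N) = u i) ∧ ∀ w : Fin n → Fin a, ∃! i : Fin N, Covers a n u (i : ℕ) w

/-- The frame of the window of `u` at position `i` is `k`-curtained (for
`1 ≤ k ≤ n`): for each `j < k`, position `j` or position `n - k + j` of the window is
a diamond.  Curtained means `k`-curtained for some `k`. -/
def Curtained (a n : ℕ) (u : ℕ → Option (Fin a)) (i : ℕ) : Prop :=
  ∃ k, 1 ≤ k ∧ k ≤ n ∧ ∀ j < k, u (i + j) = none ∨ u (i + (n - k + j)) = none

section Aux

variable {a n N : ℕ} {u : ℕ → Option (Fin a)}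

lemma u_add_mul (hper : ∀ i, u (i + N) = u i) (x m : ℕ) : u (x + m * N) = u x := by
  induction m with
  | zero => simp
  | succ m ih =>
    have h : x + (m + 1) * N = (x + m * N) + N := by ring
    rw [h, hper, ih]

lemma u_congr (hper : ∀ i, u (i + N) = u i) {x y : ℕ} (h : x % N = y % N) :
    u x = u y := by
  have hx : u x = u (x % N) := by
    conv_lhs => rw [show x = x % N + (x / N) * N from (Nat.mod_add_div' x N).symm]
    exact u_add_mul hper _ _
  have hy : u y = u (y % N) := by
    conv_lhs => rw [show y = y % N + (y / N) * N from (Nat.mod_add_div' y N).symm]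
    exact u_add_mul hper _ _
  rw [hx, hy, h]

lemma covers_congr (hper : ∀ i, u (i + N) = u i) {x y : ℕ} (h : x % N = y % N)
    {w : Fin n → Fin a} (hc : Covers a n u x w) : Covers a n u y w := by
  intro j
  have he : u (y + (j : ℕ)) = u (x + (j : ℕ)) :=
    u_congr hper (Nat.ModEq.add_right (j : ℕ) (Nat.ModEq.symm h))
  rw [he]
  exact hc j

lemma covers_getD (q : ℕ) (d : Fin a) :
    Covers a n u q (fun j => (u (q + (j : ℕ))).getD d) := by
  intro j
  cases h : u (q + (j : ℕ)) with
  | none => exact Or.inl rfl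
  | some c => exact Or.inr (by simp [h])

lemma covers_unique_mod (hu : IsUpcycle a n N u) (hN : 0 < N) {x y : ℕ}
    {w : Fin n → Fin a} (hx : Covers a n u x w) (hy : Covers a n u y w) :
    x % N = y % N := by
  obtain ⟨q, _, huniq⟩ := hu.2 w
  have h1 : (⟨x % N, Nat.mod_lt _ hN⟩ : Fin N) = q :=
    huniq _ (covers_congr hu.1 (Nat.mod_mod_of_dvd x (dvd_refl N)).symm hx)
  have h2 : (⟨y % N, Nat.mod_lt _ hN⟩ : Fin N) = q :=
    huniq _ (covers_congr hu.1 (Nat.mod_mod_of_dvd y (dvd_refl N)).symm hy)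
  exact congrArg Fin.val (h1.trans h2.symm)

/-- Diamonds of an upcycle are `n`-periodic (forward direction). -/
lemma diamond_shift (hu : IsUpcycle a n N u) (ha : 2 ≤ a) (hn : 0 < n) (hN : 0 < N)
    {p : ℕ} (hp : u p = none) : u (p + n) = none := by
  by_contra hpn
  obtain ⟨c, hc⟩ := Option.ne_none_iff_exists'.mp hpn
  haveI : Nontrivial (Fin a) := Fin.nontrivial_iff_two_le.mpr ha
  obtain ⟨c', hc'⟩ := exists_ne c
  -- a word covered at window p+1
  have hv : Covers a n u (p + 1) (fun j => (u (p + 1 + (j : ℕ))).getD c) :=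
    covers_getD _ _
  -- v' : change its last letter to c'
  obtain ⟨v', hv'l, hv'o⟩ :
      ∃ v' : Fin n → Fin a, v' ⟨n - 1, by omega⟩ = c' ∧
        ∀ j : Fin n, (j : ℕ) ≠ n - 1 → v' j = (u (p + 1 + (j : ℕ))).getD c := by
    refine ⟨Function.update (fun j => (u (p + 1 + (j : ℕ))).getD c) ⟨n - 1, by omega⟩ c',
      ?_, ?_⟩
    · simp
    · intro j hj
      apply Function.update_of_ne
      exact fun hcon => hj (by simpa using congrArg Fin.val hcon)
  obtain ⟨q, hq, -⟩ := hu.2 v'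
  have hql : u (p + 1 + (n - 1)) = some c := by
    rw [show p + 1 + (n - 1) = p + n from by omega, hc]
  -- v' is not covered at p+1
  have hnc : ¬ Covers a n u (p + 1) v' := by
    intro h
    rcases h ⟨n - 1, by omega⟩ with h0 | h0 <;> rw [hql] at h0
    · exact nomatch h0
    · rw [hv'l] at h0
      exact hc' (Option.some.inj h0).symm
  have hne : ¬ ((p + 1) % N = (q : ℕ) % N) := fun h =>
    hnc (covers_congr hu.1 h.symm hq)
  -- the word w2 = y0 ⌢ v'[0..n-2], covered both at p and at q + N - 1
  obtain ⟨w2, hw20, hw2s⟩ :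
      ∃ w2 : Fin n → Fin a, w2 ⟨0, hn⟩ = (u ((q : ℕ) + N - 1)).getD c ∧
        ∀ j : Fin n, ∀ h0 : 0 < (j : ℕ), w2 j = v' ⟨(j : ℕ) - 1, by omega⟩ := by
    refine ⟨fun j => if h0 : 0 < (j : ℕ) then v' ⟨(j : ℕ) - 1, by omega⟩
      else (u ((q : ℕ) + N - 1)).getD c, by simp, fun j h0 => by simp [h0]⟩
  have hw2q : Covers a n u ((q : ℕ) + N - 1) w2 := by
    intro j
    rcases Nat.eq_zero_or_pos (j : ℕ) with h0 | h0
    · have hjeq : j = ⟨0, hn⟩ := Fin.ext h0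
      subst hjeq
      rw [hw20]
      simp only [Fin.val_mk, Nat.add_zero]
      cases hqq : u ((q : ℕ) + N - 1) with
      | none => exact Or.inl rfl
      | some d => exact Or.inr rfl
    · have e : (q : ℕ) + N - 1 + (j : ℕ) =
          ((q : ℕ) + ((⟨(j : ℕ) - 1, by omega⟩ : Fin n) : ℕ)) + N := by
        simp only [Fin.val_mk]; omega
      rw [e, hu.1, hw2s j h0]
      exact hq _
  have hw2p : Covers a n u p w2 := by
    intro j
    rcases Nat.eq_zero_or_pos (j : ℕ) with h0 | h0
    · left; rw [h0, Nat.add_zero]; exact hp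
    · have e : p + (j : ℕ) = (p + 1) + ((⟨(j : ℕ) - 1, by omega⟩ : Fin n) : ℕ) := by
        simp only [Fin.val_mk]; omega
      rw [e, hw2s j h0]
      have hv'v : v' ⟨(j : ℕ) - 1, by omega⟩ =
          (u (p + 1 + ((⟨(j : ℕ) - 1, by omega⟩ : Fin n) : ℕ))).getD c := by
        have := j.2
        exact hv'o _ (by simp only [Fin.val_mk]; omega)
      rw [hv'v]
      exact covers_getD _ _ _
  have hmod : p % N = ((q : ℕ) + N - 1) % N := covers_unique_mod hu hN hw2p hw2q
  apply hne
  have h2 : (p + 1) % N = ((q : ℕ) + N - 1 + 1) % N := Nat.ModEq.add_right 1 hmod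
  rw [show (q : ℕ) + N - 1 + 1 = (q : ℕ) + N from by omega] at h2
  rw [h2, Nat.add_mod_right]

/-- A nontrivial upcycle has period greater than `n`. -/
lemma n_lt_N (hu : IsUpcycle a n N u) (ha : 2 ≤ a) (hN : 0 < N)
    (hletter : ∃ i, u i ≠ none) : n < N := by
  by_contra hle
  push_neg at hle
  obtain ⟨p0, hp0⟩ := hletter
  obtain ⟨c, hc⟩ := Option.ne_none_iff_exists'.mp hp0
  haveI : Nontrivial (Fin a) := Fin.nontrivial_iff_two_le.mpr ha
  obtain ⟨c', hc'⟩ := exists_ne c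
  obtain ⟨q, hq, -⟩ := hu.2 (fun _ => c')
  have hjn : (p0 + (N - (q : ℕ))) % N < n := lt_of_lt_of_le (Nat.mod_lt _ hN) hle
  have hqN : (q : ℕ) ≤ N := le_of_lt q.2
  have hmod : ((q : ℕ) + ((⟨(p0 + (N - (q : ℕ))) % N, hjn⟩ : Fin n) : ℕ)) % N
      = p0 % N := by
    simp only [Fin.val_mk]
    rw [Nat.add_mod_mod,
      show (q : ℕ) + (p0 + (N - (q : ℕ))) = p0 + N from by omega, Nat.add_mod_right]
  have he : u ((q : ℕ) + ((⟨(p0 + (N - (q : ℕ))) % N, hjn⟩ : Fin n) : ℕ)) = u p0 :=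
    u_congr hu.1 hmod
  rcases hq ⟨(p0 + (N - (q : ℕ))) % N, hjn⟩ with h | h <;> rw [he, hc] at h
  · exact nomatch h
  · exact hc' (Option.some.inj h).symm

end Aux

/-- If `u` is a nontrivial upcycle for `(Fin a)^n`, then for any letter `ℓ`, the frame
of the window of `u` covering the constant word `ℓ^n` is not curtained. -/
theorem window_covering_constant_not_curtained (a n N : ℕ) (ha : 2 ≤ a) (hn : 0 < n)
    (u : ℕ → Option (Fin a))
    (hu : IsUpcycle a n N u)
    (hdiam : ∃ i, u i = none) (hletter : ∃ i, u i ≠ none)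
    (ℓ : Fin a) (i : ℕ) (hi : Covers a n u i (fun _ => ℓ)) :
    ¬ Curtained a n u i := by
  rintro ⟨k, hk1, hkn, hcur⟩
  obtain ⟨q0, -, -⟩ := hu.2 (fun _ => ℓ)
  have hN : 0 < N := lt_of_le_of_lt (Nat.zero_le _) q0.isLt
  have hNn : n < N := n_lt_N hu ha hN hletter
  have h1 : Covers a n u (i + k) (fun j => (u (i + k + (j : ℕ))).getD ℓ) :=
    covers_getD _ _
  have h2 : Covers a n u i (fun j => (u (i + k + (j : ℕ))).getD ℓ) := by
    intro j
    cases hij : u (i + (j : ℕ)) with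
    | none => exact Or.inl rfl
    | some c =>
      right
      have hcl : c = ℓ := by
        rcases hi j with h | h
        · rw [hij] at h; exact nomatch h
        · rw [hij] at h; exact Option.some.inj h
      have hvj : (u (i + k + (j : ℕ))).getD ℓ = ℓ := by
        by_cases hjk : k + (j : ℕ) < n
        · have e : i + k + (j : ℕ) = i + ((⟨k + (j : ℕ), hjk⟩ : Fin n) : ℕ) := by
            simp only [Fin.val_mk]; omega
          rw [e]
          rcases hi ⟨k + (j : ℕ), hjk⟩ with h | h <;> rw [h] <;> rfl
        · have htk : k + (j : ℕ) - n < k := by have := j.2; omega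
          have hdia : u (i + (k + (j : ℕ) - n)) = none := by
            rcases hcur (k + (j : ℕ) - n) htk with h | h
            · exact h
            · exfalso
              rw [show n - k + (k + (j : ℕ) - n) = (j : ℕ) from by omega, hij] at h
              exact nomatch h
          have hdia2 : u (i + (k + (j : ℕ) - n) + n) = none :=
            diamond_shift hu ha hn hN hdia
          rw [show i + k + (j : ℕ) = i + (k + (j : ℕ) - n) + n from by omega, hdia2]
          rfl
      show some c = some ((u (i + k + (j : ℕ))).getD ℓ)
      rw [hvj, hcl]
  have hmod : i % N = (i + k) % N := covers_unique_mod hu hN h2 h1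
  have hdvd : N ∣ k := by
    have := (Nat.modEq_iff_dvd' (Nat.le_add_right i k)).mp hmod
    simpa using this
  have : N ≤ k := Nat.le_of_dvd (by omega) hdvd
  omega
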